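/- Let f : ℝ^d → ℝ be a convex differentiable function whose gradient ∇f is L-Lipschitz, and let (α_k)_{k∈ℕ} be stepsizes with 0 < α_k ≤ 1/L for all k. Then for any x₀ ∈ ℝ^d, the gradient-descent sequence defined by x_{k+1} = x_k − α_k ∇f(x_k) for all k ≥ 0 is self-contracted. -/

import Mathlib

open InnerProductSpace Set intervalIntegral

local notation "⟪" x ", " y "⟫" => @inner ℝ _ _ x y

section aux

variable {E : Type*} [NormedAddCommGroup E] [InnerProductSpace ℝ E] [CompleteSpace E]
variable {f : E → ℝ} {f' : E → E}

/-- Derivative along a line. -/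
lemma line_hasDerivAt (hf_diff : ∀ y, HasGradientAt f (f' y) y) (a v : E) (t : ℝ) :
    HasDerivAt (fun s : ℝ => f (a + s • v)) ⟪f' (a + t • v), v⟫ t := by
  have hline : HasDerivAt (fun s : ℝ => a + s • v) v t :=
    by simpa using ((hasDerivAt_id t).smul_const v).const_add a
  have hg : HasFDerivAt f (toDual ℝ E (f' (a + t • v))) (a + t • v) := hf_diff _
  have := hg.comp_hasDerivAt t hline
  exact this

/-- First-order convexity inequality. -/
lemma convex_grad_ineq (hf_convex : ConvexOn ℝ Set.univ f)
    (hf_diff : ∀ y, HasGradientAt f (f' y) y) (a b : E) :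
    ⟪f' a, b - a⟫ ≤ f b - f a := by
  set φ : ℝ → ℝ := fun s => f (a + s • (b - a)) with hφ
  have hd : HasDerivAt φ ⟪f' a, b - a⟫ 0 := by
    have := line_hasDerivAt hf_diff a (b - a) 0
    simpa using this
  have hslope : Filter.Tendsto (slope φ 0) (nhdsWithin 0 (Set.Ioi (0:ℝ))) (nhds ⟪f' a, b - a⟫) :=
    (hasDerivAt_iff_tendsto_slope.mp hd).mono_left
      (nhdsWithin_mono 0 (by intro t ht; exact ne_of_gt ht))
  refine le_of_tendsto hslope ?_
  filter_upwards [Ioo_mem_nhdsGT_of_mem (by norm_num : (0:ℝ) ∈ Set.Ico 0 1)] with t ht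
  obtain ⟨ht0, ht1⟩ := ht
  have hconv := hf_convex.2 (Set.mem_univ b) (Set.mem_univ a)
      ht0.le (by linarith : (0:ℝ) ≤ 1 - t) (by ring : t + (1 - t) = 1)
  have hpt : a + t • (b - a) = t • b + (1 - t) • a := by
    module
  have hle : φ t ≤ t * f b + (1 - t) * f a := by
    rw [hφ]; simp only; rw [hpt]; simpa [smul_eq_mul] using hconv
  have hφ0 : φ 0 = f a := by simp [hφ]
  rw [slope_def_field, sub_zero, div_le_iff₀ ht0]
  linarith


/-- Descent lemma: quadratic upper bound from Lipschitz gradient. -/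
lemma descent_lemma {L : ℝ} (hL : 0 ≤ L)
    (hf_diff : ∀ y, HasGradientAt f (f' y) y)
    (hf_lip : ∀ x y, ‖f' x - f' y‖ ≤ L * ‖x - y‖) (a b : E) :
    f b ≤ f a + ⟪f' a, b - a⟫ + L / 2 * ‖b - a‖ ^ 2 := by
  set v := b - a with hv
  set ψ : ℝ → ℝ := fun s => ⟪f' (a + s • v), v⟫ with hψ
  have hcont : Continuous f' := by
    have hlw : LipschitzWith (Real.toNNReal L) f' := by
      apply LipschitzWith.of_dist_le_mul
      intro p q
      rw [dist_eq_norm, dist_eq_norm, Real.coe_toNNReal L hL]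
      exact hf_lip p q
    exact hlw.continuous
  have hψc : Continuous ψ :=
    (hcont.comp (continuous_const.add (continuous_id.smul continuous_const))).inner
      continuous_const
  have hderiv : ∀ t ∈ Set.uIcc (0:ℝ) 1, HasDerivAt (fun s : ℝ => f (a + s • v)) (ψ t) t :=
    fun t _ => line_hasDerivAt hf_diff a v t
  have hint : IntervalIntegrable ψ MeasureTheory.volume 0 1 :=
    hψc.intervalIntegrable 0 1
  have heq : ∫ t in (0:ℝ)..1, ψ t = f b - f a := by
    rw [integral_eq_sub_of_hasDerivAt hderiv hint]
    norm_num [hv]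
  have hbound : ∫ t in (0:ℝ)..1, ψ t ≤ ∫ t in (0:ℝ)..1, (⟪f' a, v⟫ + L * ‖v‖^2 * t) := by
    apply integral_mono_on (by norm_num) hint
      ((continuous_const.add (continuous_const.mul continuous_id')).intervalIntegrable 0 1)
    intro t ht
    have h1 : ψ t - ⟪f' a, v⟫ = ⟪f' (a + t • v) - f' a, v⟫ := by
      rw [inner_sub_left]
    have h2 : ⟪f' (a + t • v) - f' a, v⟫ ≤ ‖f' (a + t • v) - f' a‖ * ‖v‖ :=
      real_inner_le_norm _ _
    have h3 : ‖f' (a + t • v) - f' a‖ ≤ L * (t * ‖v‖) := by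
      have := hf_lip (a + t • v) a
      simpa [norm_smul, abs_of_nonneg ht.1] using this
    have h4 : ‖f' (a + t • v) - f' a‖ * ‖v‖ ≤ L * (t * ‖v‖) * ‖v‖ :=
      mul_le_mul_of_nonneg_right h3 (norm_nonneg _)
    show ψ t ≤ ⟪f' a, v⟫ + L * ‖v‖^2 * t
    nlinarith [norm_nonneg v]
  have hrhs : ∫ t in (0:ℝ)..1, (⟪f' a, v⟫ + L * ‖v‖^2 * t) = ⟪f' a, v⟫ + L / 2 * ‖v‖^2 := by
    rw [integral_add (f := fun _ => ⟪f' a, v⟫) (g := fun t => L * ‖v‖^2 * t) intervalIntegrable_const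
      ((continuous_const.mul continuous_id').intervalIntegrable 0 1),
      integral_const, integral_const_mul, integral_id]
    norm_num; ring
  rw [heq, hrhs] at hbound
  linarith

end aux


/-- A sequence `x : ℕ → ℝ^d` is self-contracted if for all `k₁ ≤ k₂ ≤ k₃`,
`‖x k₃ - x k₂‖ ≤ ‖x k₃ - x k₁‖`. -/
def SelfContracted {d : ℕ} (x : ℕ → EuclideanSpace ℝ (Fin d)) : Prop :=
  ∀ k₁ k₂ k₃ : ℕ, k₁ ≤ k₂ → k₂ ≤ k₃ → ‖x k₃ - x k₂‖ ≤ ‖x k₃ - x k₁‖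

/-- Gradient descent on a convex function with L-Lipschitz gradient, with stepsizes
`0 < α_k ≤ 1/L`, generates a self-contracted sequence. -/
theorem gradientDescent_selfContracted {d : ℕ} {L : ℝ}
    (f : EuclideanSpace ℝ (Fin d) → ℝ)
    (f' : EuclideanSpace ℝ (Fin d) → EuclideanSpace ℝ (Fin d))
    (hf_convex : ConvexOn ℝ Set.univ f)
    (hf_diff : ∀ y, HasGradientAt f (f' y) y)
    (hf_lip : ∀ x y, ‖f' x - f' y‖ ≤ L * ‖x - y‖)
    (α : ℕ → ℝ) (hα : ∀ k, 0 < α k ∧ α k ≤ 1 / L)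
    (x₀ : EuclideanSpace ℝ (Fin d))
    (x : ℕ → EuclideanSpace ℝ (Fin d)) (hx0 : x 0 = x₀)
    (hx : ∀ k, x (k + 1) = x k - α k • f' (x k)) :
    SelfContracted x := by
  have hL : 0 < L := by
    by_contra h
    push_neg at h
    have h1 : 1 / L ≤ 0 := by
      rcases lt_or_eq_of_le h with h' | h'
      · exact le_of_lt (one_div_neg.mpr h')
      · simp [h']
    linarith [(hα 0).1, (hα 0).2]
  have hconv := fun a b => convex_grad_ineq hf_convex hf_diff a b
  have hstep : ∀ k, f (x (k+1)) ≤ f (x k) - α k / 2 * ‖f' (x k)‖^2 := by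
    intro k
    have hd := descent_lemma hL.le hf_diff hf_lip (x k) (x (k+1))
    have hxk : x (k+1) - x k = -(α k • f' (x k)) := by rw [hx k]; abel
    rw [hxk] at hd
    have hin : ⟪f' (x k), -(α k • f' (x k))⟫ = -(α k * ‖f' (x k)‖^2) := by
      rw [inner_neg_right, real_inner_smul_right, real_inner_self_eq_norm_sq]
    have hnn : ‖-(α k • f' (x k))‖^2 = α k ^2 * ‖f' (x k)‖^2 := by
      rw [norm_neg, norm_smul, mul_pow, Real.norm_eq_abs, sq_abs]
    rw [hin, hnn] at hd
    have hαL : α k * L ≤ 1 := (le_div_iff₀ hL).mp (hα k).2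
    nlinarith [(hα k).1, sq_nonneg ‖f' (x k)‖,
      mul_nonneg (mul_nonneg (hα k).1.le (sq_nonneg ‖f' (x k)‖)) (sub_nonneg.mpr hαL)]
  have hmono : ∀ n m, n ≤ m → f (x m) ≤ f (x n) := by
    intro n m hnm
    induction m, hnm using Nat.le_induction with
    | base => exact le_refl _
    | succ m hm ih =>
        have h1 := hstep m
        have h2 : 0 ≤ α m / 2 * ‖f' (x m)‖ ^ 2 :=
          mul_nonneg (by linarith [(hα m).1]) (sq_nonneg _)
        linarith
  have key : ∀ k N, k + 1 ≤ N → ‖x N - x (k+1)‖ ≤ ‖x N - x k‖ := by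
    intro k N hkN
    have hg := hconv (x k) (x N)
    have hfN : f (x N) ≤ f (x (k+1)) := hmono _ _ hkN
    have hstepk := hstep k
    have hsq : ‖x N - x (k+1)‖^2 ≤ ‖x N - x k‖^2 := by
      have hrw : x N - x (k+1) = (x N - x k) + α k • f' (x k) := by rw [hx k]; abel
      rw [hrw, norm_add_sq_real, real_inner_smul_right, norm_smul, mul_pow, Real.norm_eq_abs, sq_abs]
      have hinner : ⟪x N - x k, f' (x k)⟫ = ⟪f' (x k), x N - x k⟫ := real_inner_comm _ _
      rw [hinner]
      nlinarith [(hα k).1]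
    exact (pow_le_pow_iff_left₀ (norm_nonneg _) (norm_nonneg _) two_ne_zero).mp hsq
  intro k₁ k₂ k₃ h12 h23
  induction k₂, h12 using Nat.le_induction with
  | base => exact le_refl _
  | succ n hn ih =>
      exact le_trans (key n k₃ h23) (ih (le_trans (Nat.le_succ n) h23))
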